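/- arXiv:2104.13131 — 2 statements merged into one kernel-verified Lean document; each statement's English description precedes it below -/
import Mathlib

section
/- For terminating impartial games G and H, the Grundy number of the ordinal sum G : H equals the Γ₀(H)-th excluded ordinal of the Grundy set of G, i.e. Γ₀(G : H) = ex_{Γ₀(H)}(Γ₁(G)). -/
universe u

/-- Combinatorial game theory (`SetTheory.PGame`, `Nimber`, `grundyValue`, `Impartial`) is no
longer part of Mathlib; the old definitions are reproduced here with their old meaning. -/
def Nimber : Type (u + 1) :=
  Ordinal.{u}

namespace Nimber

noncomputable instance : ConditionallyCompleteLinearOrderBot Nimber :=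
  inferInstanceAs (ConditionallyCompleteLinearOrderBot Ordinal)

instance : WellFoundedRelation Nimber :=
  inferInstanceAs (WellFoundedRelation Ordinal)

end Nimber

namespace SetTheory

inductive PGame : Type (u + 1)
  | mk : ∀ α β : Type u, (α → PGame) → (β → PGame) → PGame

namespace PGame

def LeftMoves : PGame.{u} → Type u
  | mk l _ _ _ => l

def RightMoves : PGame.{u} → Type u
  | mk _ r _ _ => r

def moveLeft : ∀ g : PGame.{u}, LeftMoves g → PGame.{u}
  | mk _ _ L _ => L

def moveRight : ∀ g : PGame.{u}, RightMoves g → PGame.{u}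
  | mk _ _ _ R => R

def IsOpt (x y : PGame.{u}) : Prop :=
  (∃ i, x = y.moveLeft i) ∨ ∃ j, x = y.moveRight j

theorem isOpt_wf : WellFounded IsOpt.{u} := by
  refine ⟨fun x => ?_⟩
  induction x with
  | mk l r L R ihL ihR =>
    refine Acc.intro _ ?_
    rintro y (⟨i, rfl⟩ | ⟨j, rfl⟩)
    · exact ihL i
    · exact ihR j

instance : WellFoundedRelation PGame.{u} :=
  ⟨IsOpt, isOpt_wf⟩

/-- The pair `(x ≤ y, x ⧏ y)`. -/
def leLF : PGame.{u} → PGame.{u} → Prop × Prop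
  | mk xl xr xL xR, mk yl yr yL yR =>
    ((∀ i, (leLF (xL i) (mk yl yr yL yR)).2) ∧ ∀ j, (leLF (mk xl xr xL xR) (yR j)).2,
     (∃ i, (leLF (mk xl xr xL xR) (yL i)).1) ∨ ∃ j, (leLF (xR j) (mk yl yr yL yR)).1)
termination_by x y => (x, y)
decreasing_by
  all_goals first
    | exact Prod.Lex.left _ _ (Or.inl ⟨_, rfl⟩)
    | exact Prod.Lex.left _ _ (Or.inr ⟨_, rfl⟩)
    | exact Prod.Lex.right _ (Or.inl ⟨_, rfl⟩)
    | exact Prod.Lex.right _ (Or.inr ⟨_, rfl⟩)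

instance : LE PGame.{u} :=
  ⟨fun x y => (leLF x y).1⟩

def PEquiv (x y : PGame.{u}) : Prop :=
  x ≤ y ∧ y ≤ x

def neg : PGame.{u} → PGame.{u}
  | mk l r L R => mk r l (fun i => neg (R i)) fun i => neg (L i)

instance : Neg PGame.{u} :=
  ⟨neg⟩

def ImpartialAux : PGame.{u} → Prop
  | mk l r L R => PEquiv (mk l r L R) (-(mk l r L R)) ∧ (∀ i, ImpartialAux (L i)) ∧
      ∀ j, ImpartialAux (R j)

class Impartial (G : PGame.{u}) : Prop where
  out : ImpartialAux G

noncomputable def grundyValue : PGame.{u} → Nimber.{u}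
  | mk _ _ L _ => sInf (Set.range fun i => grundyValue (L i))ᶜ

end PGame

end SetTheory

open SetTheory PGame Nimber

/-- The ordinal sum `G : H` of games: its options are `G : H'` for options `H'` of `H`,
and `G'` for options `G'` of `G` (discarding `H`). -/
def osum (G : PGame) : PGame → PGame
  | PGame.mk l r L R =>
    PGame.mk (G.LeftMoves ⊕ l) (G.RightMoves ⊕ r)
      (Sum.elim G.moveLeft fun j => osum G (L j))
      (Sum.elim G.moveRight fun j => osum G (R j))

/-- The Grundy set `Γ₁(G)`: the set of Grundy numbers of the options of `G`. -/
def grundySet (G : PGame) : Set Nimber :=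
  Set.range fun i => grundyValue (G.moveLeft i)

/-- The ρ-th excluded ordinal of a set `Λ`:
`ex_ρ(Λ) = mex (Λ ∪ { ex_μ(Λ) | μ < ρ })`, where `mex` is the minimal excludant
(least element of the complement). -/
noncomputable def exc (Λ : Set Nimber) : Nimber → Nimber := fun ρ =>
  sInf {a | a ∉ Λ ∧ ∀ μ < ρ, exc Λ μ ≠ a}
termination_by ρ => ρ

instance Nimber.wellFoundedLT' : WellFoundedLT Nimber.{u} :=
  inferInstanceAs (WellFoundedLT Ordinal.{u})

instance Nimber.small_Iio' (o : Nimber.{u}) : Small.{u} (Set.Iio o) :=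
  Ordinal.small_Iio (o : Ordinal.{u})

theorem Nimber.not_bddAbove_compl_of_small (s : Set Nimber.{u}) [Small.{u} s] :
    ¬ BddAbove sᶜ :=
  @Ordinal.not_bddAbove_compl_of_small s ‹_›

theorem grundyValue_eq_sInf_moveLeft (G : PGame.{u}) :
    grundyValue G = sInf (Set.range (grundyValue ∘ G.moveLeft))ᶜ := by
  cases G
  rw [grundyValue]
  rfl

section ExcLemmas

universe v

variable {Λ : Set Nimber.{max u v}}

theorem exc_eq (Λ : Set Nimber.{max u v}) (ρ : Nimber.{v}) :
    exc.{max u v, v} Λ ρ = sInf {a | a ∉ Λ ∧ ∀ μ < ρ, exc.{max u v, v} Λ μ ≠ a} := by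
  rw [exc]

theorem excSet_nonempty [Small.{max u v} Λ] (ρ : Nimber.{v}) :
    {a | a ∉ Λ ∧ ∀ μ < ρ, exc.{max u v, v} Λ μ ≠ a}.Nonempty := by
  have heq : {a | a ∉ Λ ∧ ∀ μ < ρ, exc.{max u v, v} Λ μ ≠ a}
      = (Λ ∪ exc.{max u v, v} Λ '' Set.Iio ρ)ᶜ := by
    ext a
    constructor
    · rintro ⟨h1, h2⟩ (h | ⟨μ, hμ, he⟩)
      exacts [h1 h, h2 μ hμ he]
    · intro h
      exact ⟨fun hh => h (Or.inl hh), fun μ hμ he => h (Or.inr ⟨μ, hμ, he⟩)⟩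
  rw [heq]
  have h0 : Small.{v} (exc.{max u v, v} Λ '' Set.Iio ρ) := inferInstance
  have h1 : Small.{max u v} (exc.{max u v, v} Λ '' Set.Iio ρ) := small_lift.{max (u + 1) (v + 1), u, v} _
  exact nonempty_of_not_bddAbove <| Nimber.not_bddAbove_compl_of_small _

theorem exc_mem [Small.{max u v} Λ] (ρ : Nimber.{v}) :
    exc.{max u v, v} Λ ρ ∈ {a | a ∉ Λ ∧ ∀ μ < ρ, exc.{max u v, v} Λ μ ≠ a} := by
  rw [exc_eq]
  exact csInf_mem (excSet_nonempty ρ)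

theorem exc_not_mem [Small.{max u v} Λ] (ρ : Nimber.{v}) : exc.{max u v, v} Λ ρ ∉ Λ :=
  (exc_mem (Λ := Λ) ρ).1

theorem exc_strictMono [Small.{max u v} Λ] : StrictMono (exc.{max u v, v} Λ) := by
  intro μ ρ h
  have hmem : exc.{max u v, v} Λ ρ ∈ {a | a ∉ Λ ∧ ∀ ν < μ, exc.{max u v, v} Λ ν ≠ a} :=
    ⟨(exc_mem (Λ := Λ) ρ).1, fun ν hν => (exc_mem (Λ := Λ) ρ).2 ν (hν.trans h)⟩
  have hle : exc.{max u v, v} Λ μ ≤ exc.{max u v, v} Λ ρ := by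
    rw [exc_eq]
    exact csInf_le' hmem
  exact lt_of_le_of_ne hle ((exc_mem (Λ := Λ) ρ).2 μ h)

theorem exc_main [Small.{max u v} Λ] (S : Set Nimber.{v}) [Small.{v} S] :
    sInf (Λ ∪ exc.{max u v, v} Λ '' S)ᶜ = exc.{max u v, v} Λ (sInf Sᶜ) := by
  have hSc : Sᶜ.Nonempty :=
    nonempty_of_not_bddAbove <| Nimber.not_bddAbove_compl_of_small _
  have hmemSc : sInf Sᶜ ∈ Sᶜ := csInf_mem hSc
  have hmem : exc.{max u v, v} Λ (sInf Sᶜ) ∈ (Λ ∪ exc.{max u v, v} Λ '' S)ᶜ := by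
    intro hcon
    rcases hcon with h | ⟨μ, hμS, hμ⟩
    · exact exc_not_mem _ h
    · exact hmemSc ((exc_strictMono (Λ := Λ)).injective hμ ▸ hμS)
  refine le_antisymm (csInf_le' hmem) (le_csInf ⟨_, hmem⟩ ?_)
  intro b hb
  by_contra hlt
  push_neg at hlt
  simp only [Set.mem_compl_iff, Set.mem_union, not_or] at hb
  obtain ⟨hbΛ, hbim⟩ := hb
  have hbnot : b ∉ {a | a ∉ Λ ∧ ∀ μ < sInf Sᶜ, exc.{max u v, v} Λ μ ≠ a} := by
    intro hbmem
    have := csInf_le' hbmem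
    rw [← exc_eq] at this
    exact absurd this (not_le.2 hlt)
  simp only [Set.mem_setOf_eq, not_and, not_forall] at hbnot
  obtain ⟨μ, hμlt, hμeq⟩ := hbnot hbΛ
  rw [not_not] at hμeq
  have hμS : μ ∈ S := by
    by_contra hμS
    exact absurd (csInf_le' (show μ ∈ Sᶜ from hμS)) (not_le.2 hμlt)
  exact hbim ⟨μ, hμS, hμeq⟩

end ExcLemmas

universe v

instance instSmallGrundySet (G : PGame.{u}) : Small.{u} (grundySet G) :=
  inferInstanceAs (Small.{u} (Set.range fun i => grundyValue (G.moveLeft i)))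

theorem grundyValue_osum_aux (G : PGame.{max u v}) : ∀ H : PGame.{v},
    grundyValue (osum G H) = exc.{max u v, v} (grundySet G) (grundyValue H)
  | PGame.mk l r L R => by
    rw [osum, grundyValue_eq_sInf_moveLeft, grundyValue_eq_sInf_moveLeft (PGame.mk l r L R)]
    have hrange : Set.range (grundyValue ∘
        (PGame.mk (G.LeftMoves ⊕ l) (G.RightMoves ⊕ r)
          (Sum.elim G.moveLeft fun j => osum G (L j))
          (Sum.elim G.moveRight fun j => osum G (R j))).moveLeft)
        = grundySet G ∪ exc.{max u v, v} (grundySet G) ''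
            Set.range (grundyValue ∘ (PGame.mk l r L R).moveLeft) := by
      ext a
      constructor
      · rintro ⟨i | j, rfl⟩
        · exact Or.inl ⟨i, rfl⟩
        · exact Or.inr ⟨grundyValue (L j), ⟨j, rfl⟩, (grundyValue_osum_aux G (L j)).symm⟩
      · rintro (⟨i, rfl⟩ | ⟨_, ⟨j, rfl⟩, rfl⟩)
        · exact ⟨Sum.inl i, rfl⟩
        · exact ⟨Sum.inr j, (grundyValue_osum_aux G (L j)).symm ▸ rfl⟩
    rw [hrange]
    exact exc_main (Λ := grundySet G) _

/-- `Γ₀(G : H) = ex_{Γ₀(H)}(Γ₁(G))` for terminating impartial games. -/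
theorem grundyValue_osum (G H : PGame) [G.Impartial] [H.Impartial] :
    grundyValue (osum G H) = exc (grundySet G) (grundyValue H) :=
  grundyValue_osum_aux G H
end

section
/- An ordered join S ⋈ G is terminating (admits no infinite sequence of moves) if and only if the support { i ∈ S : G_i ≠ 0 } is a well partially ordered set and each component G_i is terminating. -/
/-- An impartial combinatorial game, given by a type of positions, a move relation and a
starting position. (This representation allows non-terminating games.) -/
structure RGame where
  Pos : Type
  Move : Pos → Pos → Prop
  start : Pos

/-- A game is terminating (loopfree) if it admits no infinite sequence of moves, i.e. the
starting position is accessible under the converse move relation. -/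
def RGame.Terminating (G : RGame) : Prop :=
  Acc (fun q p => G.Move p q) G.start

/-- A poset is well partially ordered if every infinite sequence contains an infinite
ascending subsequence. -/
def IsWPO (S : Type) [PartialOrder S] : Prop :=
  ∀ f : ℕ → S, ∃ g : ℕ → ℕ, StrictMono g ∧ Monotone (f ∘ g)

/-- The move relation of the ordered join `S ⋈ G`: a position assigns to each `i ∈ S` either a
position of `G i` or `none` (the component having been replaced by the empty game `0`); a move
is made in a single component `i₀`, all components strictly above `i₀` are emptied and all
others are left unchanged. -/
def OJMove {S : Type} [PartialOrder S] (G : S → RGame)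
    (x y : ∀ i, Option (G i).Pos) : Prop :=
  ∃ (i₀ : S) (p q : (G i₀).Pos), x i₀ = some p ∧ (G i₀).Move p q ∧ y i₀ = some q ∧
    (∀ i, i₀ < i → y i = none) ∧ ∀ i, i ≠ i₀ → ¬ i₀ < i → y i = x i

private lemma acc_no_inf {α : Type*} {r : α → α → Prop} {a : α} (h : Acc r a)
    (f : ℕ → α) (h0 : f 0 = a) (hf : ∀ n, r (f (n + 1)) (f n)) : False := by
  induction h generalizing f with
  | intro a ha ih => exact ih (f 1) (h0 ▸ hf 0) (fun n => f (n + 1)) rfl fun n => hf (n + 1)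

private lemma not_acc_inf {α : Type*} {r : α → α → Prop} {a : α} (h : ¬ Acc r a) :
    ∃ f : ℕ → α, f 0 = a ∧ ∀ n, r (f (n + 1)) (f n) := by
  have step : ∀ x : {x : α // ¬ Acc r x}, ∃ y : {x : α // ¬ Acc r x}, r y.1 x.1 := by
    rintro ⟨x, hx⟩
    by_contra hc
    push_neg at hc
    exact hx (Acc.intro x fun y hy => by
      by_contra hy'
      exact hc ⟨y, hy'⟩ hy)
  choose nxt hnxt using step
  let F : ℕ → {x : α // ¬ Acc r x} := fun n => Nat.rec ⟨a, h⟩ (fun _ x => nxt x) n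
  exact ⟨fun n => (F n).1, rfl, fun n => hnxt (F n)⟩

private lemma acc_transGen {α : Type*} {r : α → α → Prop} {a : α} (h : Acc r a) :
    Acc (Relation.TransGen r) a := by
  induction h with
  | intro x hx ih =>
    refine Acc.intro x fun y hy => ?_
    cases hy with
    | single h => exact ih y h
    | tail h₁ h₂ => exact (ih _ h₂).inv h₁

/-- the ordered join `S ⋈ G` is terminating iff its support
`{ i ∈ S | G i ≠ 0 }` is a well partially ordered set and each component `G i` is
terminating. -/
theorem ojoin_terminating_iff {S : Type} [PartialOrder S] (G : S → RGame) :
    Acc (fun y x => OJMove G x y) (fun i => some (G i).start) ↔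
      IsWPO {i : S // ∃ q, (G i).Move (G i).start q} ∧ ∀ i, (G i).Terminating := by
  classical
  constructor
  · intro hacc
    have hterm : ∀ i, (G i).Terminating := by
      intro i
      by_contra hi
      obtain ⟨s, hs0, hs⟩ := not_acc_inf hi
      -- hs n : (G i).Move (s n) (s (n+1))
      set x : ℕ → ∀ j, Option (G j).Pos := fun n j =>
        if h : j = i then some (h ▸ s n)
        else if i < j ∧ n ≠ 0 then none else some (G j).start with hxdef
      refine acc_no_inf hacc x ?_ ?_
      · funext j
        by_cases h : j = i
        · subst h; simp [hxdef, hs0]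
        · simp [hxdef, h]
      · intro n
        refine ⟨i, s n, s (n + 1), ?_, hs n, ?_, ?_, ?_⟩
        · simp [hxdef]
        · simp [hxdef]
        · intro j hj
          have hji : j ≠ i := fun e => absurd (e ▸ hj) (lt_irrefl i)
          simp [hxdef, hji, hj]
        · intro j hji hnj
          simp [hxdef, hji, hnj]
    refine ⟨?_, hterm⟩
    have hpwo : (Set.univ : Set {i : S // ∃ q, (G i).Move (G i).start q}).PartiallyWellOrderedOn
        (· ≤ ·) := by
      rw [Set.partiallyWellOrderedOn_iff_exists_lt]
      intro f _
      by_contra hc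
      push_neg at hc
      -- hc : ∀ m n, m < n → ¬ f m ≤ f n
      choose qq hqq using fun n => (f n).2
      set x : ℕ → ∀ j, Option (G j).Pos := fun n =>
        Nat.rec (fun j => some (G j).start)
          (fun n xn j => if h : j = (f n).1 then some (h.symm ▸ qq n)
            else if (f n).1 < j then none else xn j) n with hxdef
      have hinv : ∀ n (j : S), (∀ k, k < n → (f k).1 ≠ j ∧ ¬ (f k).1 < j) →
          x n j = some (G j).start := by
        intro n
        induction n with
        | zero => intro j _; rfl
        | succ n ih =>
          intro j hj
          have h1 := hj n (Nat.lt_succ_self n)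
          have : x (n + 1) j = if h : j = (f n).1 then some (h.symm ▸ qq n)
              else if (f n).1 < j then none else x n j := rfl
          rw [this, dif_neg (fun e => h1.1 e.symm), if_neg h1.2]
          exact ih j fun k hk => hj k (Nat.lt_succ_of_lt hk)
      have hbad : ∀ n k, k < n → (f k).1 ≠ (f n).1 ∧ ¬ (f k).1 < (f n).1 := by
        intro n k hk
        have h := hc k n hk
        constructor
        · intro e
          exact h (le_of_eq (Subtype.ext e))
        · intro hlt
          exact h (Subtype.mk_le_mk.2 hlt.le)
      refine acc_no_inf hacc x rfl ?_
      intro n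
      refine ⟨(f n).1, (G (f n).1).start, qq n, ?_, hqq n, ?_, ?_, ?_⟩
      · exact hinv n (f n).1 (hbad n)
      · show (if h : (f n).1 = (f n).1 then some (h.symm ▸ qq n)
            else if (f n).1 < (f n).1 then none else x n (f n).1) = some (qq n)
        rw [dif_pos rfl]
      · intro j hj
        have hji : j ≠ (f n).1 := fun e => absurd (e ▸ hj) (lt_irrefl _)
        show (if h : j = (f n).1 then some (h.symm ▸ qq n)
            else if (f n).1 < j then none else x n j) = none
        rw [dif_neg hji, if_pos hj]
      · intro j hji hnj
        show (if h : j = (f n).1 then some (h.symm ▸ qq n)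
            else if (f n).1 < j then none else x n j) = x n j
        rw [dif_neg hji, if_neg hnj]
    intro f
    obtain ⟨g, hg⟩ := hpwo.exists_monotone_subseq (f := f) fun n => Set.mem_univ _
    exact ⟨g, g.strictMono, fun a b hab => hg a b hab⟩
  · rintro ⟨hwpo, hterm⟩
    by_contra hnacc
    obtain ⟨x, hx0, hmv⟩ := not_acc_inf hnacc
    -- hmv n : OJMove G (x n) (x (n+1))
    choose i p q h1 h2 h3 h4 h5 using hmv
    have hmove : ∀ n (j : S) (e : j = i n), ∃ p' q', x n j = some p' ∧ (G j).Move p' q' ∧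
        x (n + 1) j = some q' := by
      intro n j e; subst e; exact ⟨p n, q n, h1 n, h2 n, h3 n⟩
    have none_mono : ∀ (j : S) m n, m ≤ n → x m j = none → x n j = none := by
      intro j m n hmn hm
      induction n, hmn using Nat.le_induction with
      | base => exact hm
      | succ n hn ih =>
        by_cases he : j = i n
        · obtain ⟨p', q', ha, _, _⟩ := hmove n j he
          rw [ih] at ha; exact absurd ha (by simp)
        · by_cases hlt : i n < j
          · exact h4 n j hlt
          · rw [h5 n j he hlt]; exact ih
    have reach : ∀ n (j : S) r, x n j = some r →
        Relation.ReflTransGen (G j).Move (G j).start r := by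
      intro n
      induction n with
      | zero =>
        intro j r hr
        rw [hx0] at hr
        cases hr
        exact Relation.ReflTransGen.refl
      | succ n ih =>
        intro j r hr
        by_cases he : j = i n
        · obtain ⟨p', q', ha, hb, hd⟩ := hmove n j he
          rw [hd] at hr
          cases hr
          exact (ih j p' ha).tail hb
        · by_cases hlt : i n < j
          · rw [h4 n j hlt] at hr; exact absurd hr (by simp)
          · rw [h5 n j he hlt] at hr; exact ih j r hr
    have support : ∀ n, ∃ q', (G (i n)).Move (G (i n)).start q' := by
      intro n
      rcases (reach n (i n) (p n) (h1 n)).cases_head with he | ⟨c, hc, _⟩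
      · exact ⟨q n, he ▸ h2 n⟩
      · exact ⟨c, hc⟩
    set F : ℕ → {i : S // ∃ q, (G i).Move (G i).start q} := fun n => ⟨i n, support n⟩ with hF
    obtain ⟨g, hgmono, hmono⟩ := hwpo F
    have const : ∀ a b, a ≤ b → i (g a) = i (g b) := by
      intro a b hab
      have hle : i (g a) ≤ i (g b) := hmono hab
      rcases hle.lt_or_eq with hlt | he
      · exfalso
        have hab' : a < b := by
          rcases lt_or_eq_of_le hab with h | h
          · exact h
          · subst h; exact absurd hlt (lt_irrefl _)
        have hgab : g a < g b := hgmono hab'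
        have h0 : x (g a + 1) (i (g b)) = none := h4 (g a) (i (g b)) hlt
        have h0' : x (g b) (i (g b)) = none := none_mono (i (g b)) (g a + 1) (g b) hgab h0
        rw [h1 (g b)] at h0'
        exact absurd h0' (by simp)
      · exact he
    have between : ∀ m n (j : S) r, m < n → j = i m → x n j = some r →
        ∃ s, x m j = some s ∧ Relation.TransGen (G j).Move s r := by
      intro m n j r hmn he
      subst he
      revert r
      induction n, hmn using Nat.le_induction with
      | base =>
        intro r hr
        rw [h3 m] at hr
        cases hr
        exact ⟨p m, h1 m, Relation.TransGen.single (h2 m)⟩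
      | succ n hn ih =>
        intro r hr
        by_cases hin : i m = i n
        · obtain ⟨p', q', ha, hb, hd⟩ := hmove n (i m) hin
          rw [hd] at hr
          cases hr
          obtain ⟨s, hs, ht⟩ := ih p' ha
          exact ⟨s, hs, ht.tail hb⟩
        · by_cases hlt : i n < i m
          · rw [h4 n (i m) hlt] at hr; exact absurd hr (by simp)
          · rw [h5 n (i m) hin hlt] at hr; exact ih r hr
    have hsome : ∀ k, ∃ r, x (g k) (i (g 0)) = some r := by
      intro k
      have e := const 0 k (Nat.zero_le k)
      rw [e]
      exact ⟨p (g k), h1 (g k)⟩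
    choose c hc using hsome
    have step : ∀ k, Relation.TransGen (G (i (g 0))).Move (c k) (c (k + 1)) := by
      intro k
      obtain ⟨s, hs, ht⟩ := between (g k) (g (k + 1)) (i (g 0)) (c (k + 1))
        (hgmono (Nat.lt_succ_self k)) (const 0 k (Nat.zero_le k)) (hc (k + 1))
      rw [hc k] at hs
      cases hs
      exact ht
    -- contradiction with termination of G (i (g 0))
    have hterm' : Acc (Relation.TransGen fun q p => (G (i (g 0))).Move p q)
        (G (i (g 0))).start := acc_transGen (hterm (i (g 0)))
    have hflip : ∀ a b, Relation.TransGen (G (i (g 0))).Move a b →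
        Relation.TransGen (fun q p => (G (i (g 0))).Move p q) b a := by
      intro a b h
      exact Relation.transGen_swap.2 h
    have hacc0 : Acc (Relation.TransGen fun q p => (G (i (g 0))).Move p q) (c 0) := by
      rcases Relation.reflTransGen_iff_eq_or_transGen.1
          (reach (g 0) (i (g 0)) (c 0) (hc 0)) with he | ht
      · rw [← he] at hterm'; exact hterm'
      · exact hterm'.inv (hflip _ _ ht)
    exact acc_no_inf hacc0 c rfl fun n => hflip _ _ (step n)
end
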